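/- arXiv:1407.3343 — 4 statements merged into one kernel-verified Lean document; each statement's English description precedes it below -/
import Mathlib

section
/- Let K be a commutative ring and v, w : ℕ → K. Define A(n,k) by the recurrence A(n,k) = A(n-1,k-1) + (v_{n-1} + w_k)·A(n-1,k) with A(0,n)=δ_{0,n} and A(n,0)=∏_{i=0}^{n-1}(v_i + w_0). Then A(n,k) = ∑_{0 ≤ i_1 ≤ i_2 ≤ ... ≤ i_{n-k} ≤ k} ∏_{j=1}^{n-k} (v_{i_j + j - 1} + w_{i_j}). -/
open Finset

/-- The generalized two-weight array `A^{v,w}(n,k)`. -/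
def A {K : Type*} [CommRing K] (v w : ℕ → K) : ℕ → ℕ → K
  | 0, 0 => 1
  | 0, _ + 1 => 0
  | n + 1, 0 => (v n + w 0) * A v w n 0
  | n + 1, k + 1 => A v w n k + (v n + w (k + 1)) * A v w n (k + 1)

section Aux

variable {K : Type*} [CommRing K] (v w : ℕ → K)

/-- The sum side. -/
def S (m k : ℕ) : K :=
  ∑ f ∈ (Finset.univ : Finset (Fin m → Fin (k + 1))).filter
      (fun f => ∀ a b : Fin m, a ≤ b → f a ≤ f b),
    ∏ j : Fin m, (v ((f j : ℕ) + (j : ℕ)) + w (f j))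

lemma A_lt (n k : ℕ) (h : n < k) : A v w n k = 0 := by
  induction n generalizing k with
  | zero =>
    match k, h with
    | k + 1, _ => rfl
  | succ n ih =>
    match k, h with
    | k + 1, h =>
      show A v w n k + (v n + w (k + 1)) * A v w n (k + 1) = 0
      rw [ih k (by omega), ih (k + 1) (by omega)]
      ring

lemma S_zero_left (k : ℕ) : S v w 0 k = 1 := by
  rw [S, Finset.filter_true_of_mem (fun f _ => fun a => a.elim0)]
  simp

lemma S_zero_right (m : ℕ) : S v w m 0 = ∏ j : Fin m, (v j + w 0) := by
  rw [S, Finset.filter_true_of_mem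
    (fun f _ => fun a b _ => Fin.le_def.2 (by omega))]
  rw [Finset.sum_eq_single (fun _ => (0 : Fin 1))]
  · apply Finset.prod_congr rfl
    intro j _
    simp
  · intro b _ hb
    exact absurd (Subsingleton.elim b (fun _ => (0 : Fin 1))) hb
  · intro h
    exact absurd (Finset.mem_univ _) h

lemma A_zero_right (n : ℕ) : A v w n 0 = ∏ j : Fin n, (v j + w 0) := by
  induction n with
  | zero => simp [A]
  | succ n ih =>
    show (v n + w 0) * A v w n 0 = _
    rw [ih, Fin.prod_univ_castSucc]
    simp [mul_comm]

lemma S_succ_succ (p k : ℕ) :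
    S v w (p + 1) (k + 1) =
      S v w (p + 1) k + (v (k + 1 + p) + w (k + 1)) * S v w p (k + 1) := by
  classical
  rw [S, ← Finset.sum_filter_add_sum_filter_not _
      (fun f => f (Fin.last p) = Fin.last (k + 1))]
  have h2 : ∑ f ∈ ((Finset.univ : Finset (Fin (p + 1) → Fin (k + 2))).filter
        (fun f => ∀ a b : Fin (p + 1), a ≤ b → f a ≤ f b)).filter
        (fun f => ¬ f (Fin.last p) = Fin.last (k + 1)),
      ∏ j : Fin (p + 1), (v ((f j : ℕ) + (j : ℕ)) + w (f j)) = S v w (p + 1) k := by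
    rw [S]
    apply Finset.sum_nbij' (i := fun f => fun j => (⟨min (f j : ℕ) k, by omega⟩ : Fin (k + 1)))
      (j := fun g => fun j => (g j).castSucc)
    · intro f hf
      simp only [Finset.mem_filter, Finset.mem_univ, true_and] at hf ⊢
      intro a b hab
      have := Fin.le_def.1 (hf.1 a b hab)
      exact Fin.mk_le_mk.2 (by omega)
    · intro g hg
      simp only [Finset.mem_filter, Finset.mem_univ, true_and] at hg ⊢
      constructor
      · intro a b hab
        exact Fin.castSucc_le_castSucc_iff.2 (hg a b hab)
      · intro hcontra
        exact absurd hcontra (Fin.ne_of_lt (Fin.castSucc_lt_last _))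
    · intro f hf
      simp only [Finset.mem_filter, Finset.mem_univ, true_and] at hf
      obtain ⟨hmono, hlast⟩ := hf
      funext j
      have h1 : f j ≤ f (Fin.last p) := hmono j (Fin.last p) (Fin.le_last j)
      have h2 : (f (Fin.last p) : ℕ) < k + 1 := by
        have := Fin.lt_last_iff_ne_last.2 hlast
        exact this
      have h3 : (f j : ℕ) ≤ k := by
        have := Fin.le_def.1 h1
        omega
      apply Fin.ext
      simp [Nat.min_eq_left h3]
    · intro g hg
      funext j
      apply Fin.ext
      have h := (g j).isLt
      simp only [Fin.coe_castSucc]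
      exact Nat.min_eq_left (by omega)
    · intro f hf
      simp only [Finset.mem_filter, Finset.mem_univ, true_and] at hf
      obtain ⟨hmono, hlast⟩ := hf
      apply Finset.prod_congr rfl
      intro j _
      have h1 : f j ≤ f (Fin.last p) := hmono j (Fin.last p) (Fin.le_last j)
      have h2 : (f (Fin.last p) : ℕ) < k + 1 := Fin.lt_last_iff_ne_last.2 hlast
      have h3 : (f j : ℕ) ≤ k := by
        have := Fin.le_def.1 h1
        omega
      simp [Nat.min_eq_left h3]
  have h1 : ∑ f ∈ ((Finset.univ : Finset (Fin (p + 1) → Fin (k + 2))).filter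
        (fun f => ∀ a b : Fin (p + 1), a ≤ b → f a ≤ f b)).filter
        (fun f => f (Fin.last p) = Fin.last (k + 1)),
      ∏ j : Fin (p + 1), (v ((f j : ℕ) + (j : ℕ)) + w (f j)) =
      (v (k + 1 + p) + w (k + 1)) * S v w p (k + 1) := by
    rw [S, Finset.mul_sum]
    apply Finset.sum_nbij' (i := fun f => f ∘ Fin.castSucc)
      (j := fun g => Fin.snoc g (Fin.last (k + 1)))
    · intro f hf
      simp only [Finset.mem_filter, Finset.mem_univ, true_and] at hf ⊢
      intro a b hab
      exact hf.1 _ _ (Fin.castSucc_le_castSucc_iff.2 hab)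
    · intro g hg
      simp only [Finset.mem_filter, Finset.mem_univ, true_and] at hg ⊢
      constructor
      · intro a b hab
        induction b using Fin.lastCases with
        | last =>
          rw [Fin.snoc_last]
          exact Fin.le_last _
        | cast b' =>
          induction a using Fin.lastCases with
          | last =>
            exact absurd (lt_of_le_of_lt hab (Fin.castSucc_lt_last b'))
              (lt_irrefl _)
          | cast a' =>
            rw [Fin.snoc_castSucc, Fin.snoc_castSucc]
            exact hg a' b' (Fin.castSucc_le_castSucc_iff.1 hab)
      · exact Fin.snoc_last _ _
    · intro f hf
      simp only [Finset.mem_filter, Finset.mem_univ, true_and] at hf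
      funext j
      induction j using Fin.lastCases with
      | last => rw [Fin.snoc_last, hf.2]
      | cast j' => rw [Fin.snoc_castSucc]; rfl
    · intro g hg
      funext j
      simp [Fin.snoc_castSucc]
    · intro f hf
      simp only [Finset.mem_filter, Finset.mem_univ, true_and] at hf
      rw [Fin.prod_univ_castSucc]
      have hl : f (Fin.last p) = Fin.last (k + 1) := hf.2
      rw [hl]
      simp only [Fin.val_last, Function.comp_apply, Fin.coe_castSucc]
      ring
  rw [h1, h2, add_comm]

end Aux

theorem stmt_1 {K : Type*} [CommRing K] (v w : ℕ → K) (n k : ℕ) (hk : k ≤ n) :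
    A v w n k =
      ∑ f ∈ (Finset.univ : Finset (Fin (n - k) → Fin (k + 1))).filter
          (fun f => ∀ a b : Fin (n - k), a ≤ b → f a ≤ f b),
        ∏ j : Fin (n - k), (v ((f j : ℕ) + (j : ℕ)) + w (f j)) := by
  show A v w n k = S v w (n - k) k
  induction n generalizing k with
  | zero =>
    interval_cases k
    rw [S_zero_left]
    rfl
  | succ n ih =>
    match k, hk with
    | 0, _ =>
      rw [Nat.sub_zero, S_zero_right, A_zero_right]
    | k + 1, hk =>
      have hkn : k ≤ n := by omega
      rcases eq_or_lt_of_le hkn with rfl | hlt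
      · show A v w k k + (v k + w (k + 1)) * A v w k (k + 1) = _
        rw [ih k le_rfl, A_lt v w k (k + 1) (by omega), Nat.sub_self,
          S_zero_left, Nat.succ_sub_succ, Nat.sub_self, S_zero_left]
        ring
      · set p := n - (k + 1) with hp
        have e1 : n + 1 - (k + 1) = p + 1 := by omega
        have e2 : n - k = p + 1 := by omega
        show A v w n k + (v n + w (k + 1)) * A v w n (k + 1) = _
        rw [ih k hkn, ih (k + 1) (by omega), e1, e2, ← hp]
        rw [show n = k + 1 + p by omega]
        exact (S_succ_succ v w p k).symm
end

section
/- Let K be a commutative ring and v, w : ℕ → K, and let 0 denote the identically-zero weight function. Define A^{v,w}(n,k) by the recurrence A^{v,w}(n,k) = A^{v,w}(n-1,k-1) + (v_{n-1} + w_k)·A^{v,w}(n-1,k) with standard initial conditions. Then for all n, k: A^{v,w}(n,k) = ∑_{j=k}^{n} A^{v,0}(n,j) · A^{0,w}(j,k). -/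
open Finset

lemma A_eq_zero {K : Type*} [CommRing K] (v w : ℕ → K) :
    ∀ n k, n < k → A v w n k = 0 := by
  intro n
  induction n with
  | zero =>
    intro k hk
    match k, hk with
    | k + 1, _ => rfl
  | succ n ih =>
    intro k hk
    match k, hk with
    | k + 1, hk =>
      rw [A, ih k (by omega), ih (k + 1) (by omega)]
      ring

lemma key {K : Type*} [CommRing K] (v w : ℕ → K) (n k : ℕ) :
    A v w n k = ∑ j ∈ range (n + 1), A v (fun _ => 0) n j * A (fun _ => 0) w j k := by
  induction n generalizing k with
  | zero =>
    cases k with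
    | zero => simp [A]
    | succ k => simp [A]
  | succ n ih =>
    have shift : ∀ m, (∑ j ∈ range (n + 1),
        A v (fun _ => 0) n (j + 1) * A (fun _ => 0) w (j + 1) m)
        = (∑ j ∈ range (n + 1), A v (fun _ => 0) n j * A (fun _ => 0) w j m)
          - A v (fun _ => 0) n 0 * A (fun _ => 0) w 0 m := by
      intro m
      have h1 := Finset.sum_range_succ'
        (fun j => A v (fun _ => 0) n j * A (fun _ => 0) w j m) (n + 1)
      rw [Finset.sum_range_succ, A_eq_zero v (fun _ => 0) n (n + 1) (by omega)] at h1
      linear_combination -h1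
    rw [Finset.sum_range_succ']
    cases k with
    | zero =>
      have hc : ∀ j ∈ range (n + 1),
          A v (fun _ => 0) (n + 1) (j + 1) * A (fun _ => 0) w (j + 1) 0
          = (A v (fun _ => 0) n j * A (fun _ => 0) w j 0) * w 0
            + v n * (A v (fun _ => 0) n (j + 1) * A (fun _ => 0) w (j + 1) 0) := by
        intro j _
        show (A v (fun _ => 0) n j + (v n + 0) * A v (fun _ => 0) n (j + 1)) * _ = _
        show _ * ((0 + w 0) * A (fun _ => 0) w j 0) = _
          + v n * (A v (fun _ => 0) n (j + 1) * ((0 + w 0) * A (fun _ => 0) w j 0))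
        ring
      rw [Finset.sum_congr rfl hc, Finset.sum_add_distrib, ← Finset.sum_mul,
        ← Finset.mul_sum, shift 0, ← ih 0]
      show (v n + w 0) * A v w n 0
        = A v w n 0 * w 0
          + v n * (A v w n 0 - A v (fun _ => 0) n 0 * A (fun _ => 0) w 0 0)
          + (v n + 0) * A v (fun _ => 0) n 0 * A (fun _ => 0) w 0 0
      ring
    | succ k =>
      have hc : ∀ j ∈ range (n + 1),
          A v (fun _ => 0) (n + 1) (j + 1) * A (fun _ => 0) w (j + 1) (k + 1)
          = (A v (fun _ => 0) n j * A (fun _ => 0) w j k)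
            + (A v (fun _ => 0) n j * A (fun _ => 0) w j (k + 1)) * w (k + 1)
            + v n * (A v (fun _ => 0) n (j + 1) * A (fun _ => 0) w (j + 1) (k + 1)) := by
        intro j _
        show (A v (fun _ => 0) n j + (v n + 0) * A v (fun _ => 0) n (j + 1)) * _ = _
        show _ * (A (fun _ => 0) w j k + (0 + w (k + 1)) * A (fun _ => 0) w j (k + 1))
          = _ + v n * (A v (fun _ => 0) n (j + 1)
            * (A (fun _ => 0) w j k + (0 + w (k + 1)) * A (fun _ => 0) w j (k + 1)))
        ring
      rw [Finset.sum_congr rfl hc, Finset.sum_add_distrib, Finset.sum_add_distrib,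
        ← Finset.sum_mul, ← Finset.mul_sum, shift (k + 1), ← ih k, ← ih (k + 1)]
      have hz : A (fun _ => (0 : K)) w 0 (k + 1) = 0 := rfl
      rw [hz]
      show A v w n k + (v n + w (k + 1)) * A v w n (k + 1) = _
      ring

theorem stmt_2 {K : Type*} [CommRing K] (v w : ℕ → K) (n k : ℕ) :
    A v w n k = ∑ j ∈ Finset.Icc k n, A v (fun _ => 0) n j * A (fun _ => 0) w j k := by
  rw [key]
  refine (Finset.sum_subset ?_ ?_).symm
  · intro x hx
    simp only [Finset.mem_Icc] at hx
    simp only [Finset.mem_range]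
    omega
  · intro x hx hnx
    simp only [Finset.mem_range] at hx
    simp only [Finset.mem_Icc] at hnx
    rw [A_eq_zero (fun _ => 0) w x k (by omega), mul_zero]
end

section
/- Let K be a commutative ring, v, w : ℕ → K, and A^{v,w}(n,k) defined by the recurrence A^{v,w}(n,k) = A^{v,w}(n-1,k-1) + (v_{n-1}+w_k)·A^{v,w}(n-1,k) with standard initial conditions. Then for k ≤ n: A^{v,w}(n,k) = ∑_{j=k}^{n} A^{v,w}(j−1, k−1) · ∏_{i=j}^{n-1} (v_i + w_k). -/
open Finset

lemma A_zero_of_lt {K : Type*} [CommRing K] (v w : ℕ → K) :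
    ∀ n k : ℕ, n < k → A v w n k = 0 := by
  intro n
  induction n with
  | zero =>
    intro k hk
    obtain ⟨m, rfl⟩ : ∃ m, k = m + 1 := ⟨k - 1, by omega⟩
    rfl
  | succ n ih =>
    intro k hk
    obtain ⟨m, rfl⟩ : ∃ m, k = m + 1 := ⟨k - 1, by omega⟩
    show A v w n m + (v n + w (m+1)) * A v w n (m+1) = 0
    rw [ih m (by omega), ih (m+1) (by omega)]
    ring

theorem stmt_6 {K : Type*} [CommRing K] (v w : ℕ → K) (n k : ℕ) (hk1 : 1 ≤ k) (hkn : k ≤ n) :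
    A v w n k =
      ∑ j ∈ Finset.Icc k n, A v w (j - 1) (k - 1) * ∏ i ∈ Finset.Ico j n, (v i + w k) := by
  induction n, hkn using Nat.le_induction with
  | base =>
    obtain ⟨m, rfl⟩ : ∃ m, k = m + 1 := ⟨k - 1, by omega⟩
    simp [A, A_zero_of_lt v w m (m+1) (by omega)]
  | succ n hn ih =>
    obtain ⟨m, rfl⟩ : ∃ m, k = m + 1 := ⟨k - 1, by omega⟩
    rw [show A v w (n+1) (m+1) = A v w n m + (v n + w (m+1)) * A v w n (m+1) from rfl,
      ih, Finset.mul_sum,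
      show Finset.Icc (m+1) (n+1) = insert (n+1) (Finset.Icc (m+1) n) by
        ext x; simp only [Finset.mem_Icc, Finset.mem_insert]; omega,
      Finset.sum_insert (by simp)]
    simp only [Nat.add_sub_cancel, Finset.Ico_self, Finset.prod_empty, mul_one]
    congr 1
    apply Finset.sum_congr rfl
    intro j hj
    simp only [Finset.mem_Icc] at hj
    rw [show Finset.Ico j (n+1) = insert n (Finset.Ico j n) by
        ext x; simp only [Finset.mem_Ico, Finset.mem_insert]; omega,
      Finset.prod_insert (by simp)]
    ring
end

section
/- Let K be a commutative ring, c, d ∈ K, and v*, w*, v, w : ℕ → K with v_i = c + v*_i and w_i = d + w*_i for all i. With A defined by the standard two-weight recurrence, for all k ≤ n: A^{v,w}(n,k) = ∑_{k ≤ t₁ ≤ t₂ ≤ t₃ ≤ n} C(t₃,t₂)·C(t₂,t₁)·c^{t₃−t₂}·d^{t₂−t₁}·A^{v*,0}(n,t₃)·A^{0,w*}(t₁,k), where C denotes binomial coefficients. -/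
open Finset

section aux

variable {K : Type*} [CommRing K]

lemma A_zero_zero (v w : ℕ → K) : A v w 0 0 = 1 := rfl

lemma A_zero_succ (v w : ℕ → K) (k : ℕ) : A v w 0 (k + 1) = 0 := rfl

lemma A_succ_zero (v w : ℕ → K) (n : ℕ) : A v w (n + 1) 0 = (v n + w 0) * A v w n 0 := rfl

lemma A_succ_succ (v w : ℕ → K) (n k : ℕ) :
    A v w (n + 1) (k + 1) = A v w n k + (v n + w (k + 1)) * A v w n (k + 1) := rfl

lemma A_vanish (v w : ℕ → K) : ∀ n k, n < k → A v w n k = 0 := by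
  intro n
  induction n with
  | zero => intro k hk; match k, hk with | k + 1, _ => rfl
  | succ n ih =>
    intro k hk
    match k, hk with
    | k + 1, hk =>
      rw [A_succ_succ, ih k (by omega), ih (k + 1) (by omega)]
      ring

lemma shift_sum (f : ℕ → K) (n : ℕ) :
    ∑ s ∈ range (n + 1), f (s + 1) = (∑ t ∈ range (n + 1), f t) + f (n + 1) - f 0 := by
  have h1 := Finset.sum_range_succ' f (n + 1)
  have h2 := Finset.sum_range_succ f (n + 1)
  linear_combination h2 - h1

lemma sum_range_to_Icc (f : ℕ → K) (k n : ℕ) (h : ∀ t < k, f t = 0) :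
    ∑ t ∈ range (n + 1), f t = ∑ t ∈ Icc k n, f t := by
  refine (Finset.sum_subset ?_ ?_).symm
  · intro x hx
    simp only [Finset.mem_Icc] at hx
    simp only [Finset.mem_range]
    omega
  · intro x hx hnx
    simp only [Finset.mem_range] at hx
    simp only [Finset.mem_Icc] at hnx
    exact h x (by omega)

/-- Vertical decomposition. -/
lemma A_split' (v w : ℕ → K) : ∀ n k, A v w n k =
    ∑ t ∈ range (n + 1), A v (fun _ => 0) n t * A (fun _ => 0) w t k := by
  intro n
  induction n with
  | zero =>
    intro k
    match k with
    | 0 => simp [A_zero_zero]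
    | k + 1 => simp [A_zero_succ]
  | succ n ih =>
    intro k
    rw [Finset.sum_range_succ' (fun t => A v (fun _ => 0) (n + 1) t * A (fun _ => 0) w t k) (n + 1)]
    match k with
    | 0 =>
      have e1 : ∀ s ∈ range (n + 1),
          A v (fun _ => 0) (n + 1) (s + 1) * A (fun _ => 0) w (s + 1) 0
            = w 0 * (A v (fun _ => 0) n s * A (fun _ => 0) w s 0)
              + v n * (A v (fun _ => 0) n (s + 1) * A (fun _ => 0) w (s + 1) 0) := by
        intro s _
        simp only [A_succ_succ, A_succ_zero]
        ring
      rw [Finset.sum_congr rfl e1, Finset.sum_add_distrib, ← Finset.mul_sum, ← Finset.mul_sum]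
      have ih0 := ih 0
      have key := shift_sum (fun t => A v (fun _ => 0) n t * A (fun _ => 0) w t 0) n
      have hz : A v (fun _ => 0) n (n + 1) * A (fun _ => 0) w (n + 1) 0 = 0 := by
        rw [A_vanish v (fun _ => 0) n (n + 1) (by omega), zero_mul]
      have g0 : A v (fun _ => 0) (n + 1) 0 * A (fun _ => 0) w 0 0
          = v n * (A v (fun _ => 0) n 0 * A (fun _ => 0) w 0 0) := by
        simp only [A_succ_zero]
        ring
      rw [A_succ_zero v w n]
      linear_combination (v n + w 0) * ih0 - v n * key - v n * hz - g0
    | k + 1 =>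
      have e1 : ∀ s ∈ range (n + 1),
          A v (fun _ => 0) (n + 1) (s + 1) * A (fun _ => 0) w (s + 1) (k + 1)
            = A v (fun _ => 0) n s * A (fun _ => 0) w s k
              + w (k + 1) * (A v (fun _ => 0) n s * A (fun _ => 0) w s (k + 1))
              + v n * (A v (fun _ => 0) n (s + 1) * A (fun _ => 0) w (s + 1) (k + 1)) := by
        intro s _
        simp only [A_succ_succ]
        ring
      rw [Finset.sum_congr rfl e1, Finset.sum_add_distrib, Finset.sum_add_distrib,
        ← Finset.mul_sum, ← Finset.mul_sum]
      have ihk := ih k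
      have ihk1 := ih (k + 1)
      have key := shift_sum (fun t => A v (fun _ => 0) n t * A (fun _ => 0) w t (k + 1)) n
      have hz : A v (fun _ => 0) n (n + 1) * A (fun _ => 0) w (n + 1) (k + 1) = 0 := by
        rw [A_vanish v (fun _ => 0) n (n + 1) (by omega), zero_mul]
      have hb : A v (fun _ => 0) n 0 * A (fun _ => 0) w 0 (k + 1) = 0 := by
        rw [A_zero_succ, mul_zero]
      have g0 : A v (fun _ => 0) (n + 1) 0 * A (fun _ => 0) w 0 (k + 1) = 0 := by
        rw [A_zero_succ, mul_zero]
      rw [A_succ_succ v w n k]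
      linear_combination ihk + (v n + w (k + 1)) * ihk1 - v n * key - v n * hz - g0 + v n * hb

/-- Binomial shift on the `v` side. -/
lemma A_v_shift (c : K) (vs v : ℕ → K) (hv : ∀ i, v i = c + vs i) : ∀ n k,
    A v (fun _ => 0) n k =
      ∑ t ∈ range (n + 1), (Nat.choose t k : K) * c ^ (t - k) * A vs (fun _ => 0) n t := by
  intro n
  induction n with
  | zero =>
    intro k
    match k with
    | 0 => simp [A_zero_zero]
    | k + 1 => simp [A_zero_succ, A_zero_zero, Nat.choose_eq_zero_of_lt (by omega : 0 < k + 1)]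
  | succ n ih =>
    intro k
    rw [Finset.sum_range_succ'
      (fun t => (Nat.choose t k : K) * c ^ (t - k) * A vs (fun _ => 0) (n + 1) t) (n + 1)]
    match k with
    | 0 =>
      have e1 : ∀ s ∈ range (n + 1),
          (Nat.choose (s + 1) 0 : K) * c ^ (s + 1 - 0) * A vs (fun _ => 0) (n + 1) (s + 1)
            = c * ((Nat.choose s 0 : K) * c ^ (s - 0) * A vs (fun _ => 0) n s)
              + vs n * ((Nat.choose (s + 1) 0 : K) * c ^ (s + 1 - 0) * A vs (fun _ => 0) n (s + 1)) := by
        intro s _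
        simp only [A_succ_succ, Nat.choose_zero_right, Nat.cast_one, Nat.sub_zero, pow_succ]
        ring
      rw [Finset.sum_congr rfl e1, Finset.sum_add_distrib, ← Finset.mul_sum, ← Finset.mul_sum]
      have ih0 := ih 0
      have key := shift_sum (fun t => (Nat.choose t 0 : K) * c ^ (t - 0) * A vs (fun _ => 0) n t) n
      have hz : (Nat.choose (n + 1) 0 : K) * c ^ (n + 1 - 0) * A vs (fun _ => 0) n (n + 1) = 0 := by
        rw [A_vanish vs (fun _ => 0) n (n + 1) (by omega), mul_zero]
      have hb : (Nat.choose 0 0 : K) * c ^ (0 - 0) * A vs (fun _ => 0) n 0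
          = A vs (fun _ => 0) n 0 := by
        simp
      have g0 : (Nat.choose 0 0 : K) * c ^ (0 - 0) * A vs (fun _ => 0) (n + 1) 0
          = vs n * A vs (fun _ => 0) n 0 := by
        simp only [A_succ_zero, Nat.choose_self, Nat.cast_one, Nat.sub_zero, pow_zero]
        ring
      rw [A_succ_zero v (fun _ => 0) n, hv n]
      simp only [add_zero]
      linear_combination (c + vs n) * ih0 - vs n * key - vs n * hz - g0 + vs n * hb
    | k + 1 =>
      have e1 : ∀ s ∈ range (n + 1),
          (Nat.choose (s + 1) (k + 1) : K) * c ^ (s + 1 - (k + 1)) * A vs (fun _ => 0) (n + 1) (s + 1)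
            = (Nat.choose s k : K) * c ^ (s - k) * A vs (fun _ => 0) n s
              + c * ((Nat.choose s (k + 1) : K) * c ^ (s - (k + 1)) * A vs (fun _ => 0) n s)
              + vs n * ((Nat.choose (s + 1) (k + 1) : K) * c ^ (s + 1 - (k + 1))
                  * A vs (fun _ => 0) n (s + 1)) := by
        intro s _
        simp only [A_succ_succ, Nat.succ_sub_succ, Nat.choose_succ_succ, Nat.cast_add]
        rcases Nat.lt_or_ge s (k + 1) with hsk | hsk
        · rw [Nat.choose_eq_zero_of_lt hsk]
          push_cast
          ring
        · have hek : s - k = (s - (k + 1)) + 1 := by omega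
          rw [hek, pow_succ]
          ring
      rw [Finset.sum_congr rfl e1, Finset.sum_add_distrib, Finset.sum_add_distrib,
        ← Finset.mul_sum, ← Finset.mul_sum]
      have ihk := ih k
      have ihk1 := ih (k + 1)
      have key := shift_sum
        (fun t => (Nat.choose t (k + 1) : K) * c ^ (t - (k + 1)) * A vs (fun _ => 0) n t) n
      have hz : (Nat.choose (n + 1) (k + 1) : K) * c ^ (n + 1 - (k + 1))
          * A vs (fun _ => 0) n (n + 1) = 0 := by
        rw [A_vanish vs (fun _ => 0) n (n + 1) (by omega), mul_zero]
      have hb : (Nat.choose 0 (k + 1) : K) * c ^ (0 - (k + 1)) * A vs (fun _ => 0) n 0 = 0 := by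
        rw [Nat.choose_eq_zero_of_lt (by omega : 0 < k + 1)]
        push_cast
        ring
      have g0 : (Nat.choose 0 (k + 1) : K) * c ^ (0 - (k + 1)) * A vs (fun _ => 0) (n + 1) 0
          = 0 := by
        rw [Nat.choose_eq_zero_of_lt (by omega : 0 < k + 1)]
        push_cast
        ring
      rw [A_succ_succ v (fun _ => 0) n k, hv n]
      simp only [add_zero]
      linear_combination ihk + (c + vs n) * ihk1 - vs n * key - vs n * hz + vs n * hb - g0

/-- Binomial shift on the `w` side. -/
lemma A_w_shift (d : K) (ws w : ℕ → K) (hw : ∀ i, w i = d + ws i) : ∀ n k,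
    A (fun _ => 0) w n k =
      ∑ t ∈ range (n + 1), (Nat.choose n t : K) * d ^ (n - t) * A (fun _ => 0) ws t k := by
  intro n
  induction n with
  | zero =>
    intro k
    match k with
    | 0 => simp [A_zero_zero]
    | k + 1 => simp [A_zero_succ]
  | succ n ih =>
    intro k
    rw [Finset.sum_range_succ'
      (fun t => (Nat.choose (n + 1) t : K) * d ^ (n + 1 - t) * A (fun _ => 0) ws t k) (n + 1)]
    match k with
    | 0 =>
      have e1 : ∀ s ∈ range (n + 1),
          (Nat.choose (n + 1) (s + 1) : K) * d ^ (n + 1 - (s + 1)) * A (fun _ => 0) ws (s + 1) 0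
            = ws 0 * ((Nat.choose n s : K) * d ^ (n - s) * A (fun _ => 0) ws s 0)
              + d * ((Nat.choose n (s + 1) : K) * d ^ (n - (s + 1))
                  * A (fun _ => 0) ws (s + 1) 0) := by
        intro s hs
        simp only [Finset.mem_range] at hs
        simp only [A_succ_zero, Nat.succ_sub_succ, Nat.choose_succ_succ, Nat.cast_add]
        rcases Nat.lt_or_ge s n with hsn | hsn
        · have hen : n - s = (n - (s + 1)) + 1 := by omega
          rw [hen, pow_succ]
          ring
        · have hse : s = n := by omega
          subst hse
          rw [Nat.choose_eq_zero_of_lt (by omega : s < s + 1)]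
          push_cast
          ring
      rw [Finset.sum_congr rfl e1, Finset.sum_add_distrib, ← Finset.mul_sum, ← Finset.mul_sum]
      have ih0 := ih 0
      have key := shift_sum
        (fun t => (Nat.choose n t : K) * d ^ (n - t) * A (fun _ => 0) ws t 0) n
      have hz : (Nat.choose n (n + 1) : K) * d ^ (n - (n + 1)) * A (fun _ => 0) ws (n + 1) 0
          = 0 := by
        rw [Nat.choose_eq_zero_of_lt (by omega : n < n + 1)]
        push_cast
        ring
      have hb : (Nat.choose n 0 : K) * d ^ (n - 0) * A (fun _ => 0) ws 0 0 = d ^ n := by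
        simp [A_zero_zero]
      have g0 : (Nat.choose (n + 1) 0 : K) * d ^ (n + 1 - 0) * A (fun _ => 0) ws 0 0
          = d ^ (n + 1) := by
        simp [A_zero_zero]
      rw [A_succ_zero (fun _ => 0) w n, hw 0]
      simp only [zero_add]
      linear_combination (d + ws 0) * ih0 - d * key - d * hz + d * hb - g0
    | k + 1 =>
      have e1 : ∀ s ∈ range (n + 1),
          (Nat.choose (n + 1) (s + 1) : K) * d ^ (n + 1 - (s + 1))
              * A (fun _ => 0) ws (s + 1) (k + 1)
            = (Nat.choose n s : K) * d ^ (n - s) * A (fun _ => 0) ws s k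
              + ws (k + 1) * ((Nat.choose n s : K) * d ^ (n - s) * A (fun _ => 0) ws s (k + 1))
              + d * ((Nat.choose n (s + 1) : K) * d ^ (n - (s + 1))
                  * A (fun _ => 0) ws (s + 1) (k + 1)) := by
        intro s hs
        simp only [Finset.mem_range] at hs
        simp only [A_succ_succ, Nat.succ_sub_succ, Nat.choose_succ_succ, Nat.cast_add]
        rcases Nat.lt_or_ge s n with hsn | hsn
        · have hen : n - s = (n - (s + 1)) + 1 := by omega
          rw [hen, pow_succ]
          ring
        · have hse : s = n := by omega
          subst hse
          rw [Nat.choose_eq_zero_of_lt (by omega : s < s + 1)]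
          push_cast
          ring
      rw [Finset.sum_congr rfl e1, Finset.sum_add_distrib, Finset.sum_add_distrib,
        ← Finset.mul_sum, ← Finset.mul_sum]
      have ihk := ih k
      have ihk1 := ih (k + 1)
      have key := shift_sum
        (fun t => (Nat.choose n t : K) * d ^ (n - t) * A (fun _ => 0) ws t (k + 1)) n
      have hz : (Nat.choose n (n + 1) : K) * d ^ (n - (n + 1))
          * A (fun _ => 0) ws (n + 1) (k + 1) = 0 := by
        rw [Nat.choose_eq_zero_of_lt (by omega : n < n + 1)]
        push_cast
        ring
      have hb : (Nat.choose n 0 : K) * d ^ (n - 0) * A (fun _ => 0) ws 0 (k + 1) = 0 := by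
        rw [A_zero_succ, mul_zero]
      have g0 : (Nat.choose (n + 1) 0 : K) * d ^ (n + 1 - 0) * A (fun _ => 0) ws 0 (k + 1)
          = 0 := by
        rw [A_zero_succ, mul_zero]
      rw [A_succ_succ (fun _ => 0) w n k, hw (k + 1)]
      simp only [zero_add]
      linear_combination ihk + (d + ws (k + 1)) * ihk1 - d * key - d * hz + d * hb - g0

end aux

theorem stmt_9 {K : Type*} [CommRing K] (c d : K) (vs ws v w : ℕ → K)
    (hv : ∀ i, v i = c + vs i) (hw : ∀ i, w i = d + ws i) (n k : ℕ) (hk : k ≤ n) :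
    A v w n k =
      ∑ t3 ∈ Finset.Icc k n, ∑ t2 ∈ Finset.Icc k t3, ∑ t1 ∈ Finset.Icc k t2,
        (Nat.choose t3 t2 : K) * (Nat.choose t2 t1 : K) * c ^ (t3 - t2) * d ^ (t2 - t1) *
          A vs (fun _ => 0) n t3 * A (fun _ => 0) ws t1 k := by
  have L1 : A v w n k = ∑ t2 ∈ Icc k n, A v (fun _ => 0) n t2 * A (fun _ => 0) w t2 k := by
    rw [A_split' v w n k]
    exact sum_range_to_Icc _ k n fun t ht => by
      rw [A_vanish (fun _ => 0) w t k ht, mul_zero]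
  rw [L1]
  have step : ∀ t2 ∈ Icc k n, A v (fun _ => 0) n t2 * A (fun _ => 0) w t2 k
      = ∑ t3 ∈ Icc t2 n, ∑ t1 ∈ Icc k t2,
          (Nat.choose t3 t2 : K) * (Nat.choose t2 t1 : K) * c ^ (t3 - t2) * d ^ (t2 - t1) *
            A vs (fun _ => 0) n t3 * A (fun _ => 0) ws t1 k := by
    intro t2 _
    have L2 : A v (fun _ => 0) n t2
        = ∑ t3 ∈ Icc t2 n, (Nat.choose t3 t2 : K) * c ^ (t3 - t2) * A vs (fun _ => 0) n t3 := by
      rw [A_v_shift c vs v hv n t2]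
      exact sum_range_to_Icc _ t2 n fun t ht => by
        rw [Nat.choose_eq_zero_of_lt ht, Nat.cast_zero, zero_mul, zero_mul]
    have L3 : A (fun _ => 0) w t2 k
        = ∑ t1 ∈ Icc k t2, (Nat.choose t2 t1 : K) * d ^ (t2 - t1) * A (fun _ => 0) ws t1 k := by
      rw [A_w_shift d ws w hw t2 k]
      exact sum_range_to_Icc _ k t2 fun t ht => by
        rw [A_vanish (fun _ => 0) ws t k ht, mul_zero]
    rw [L2, L3, Finset.sum_mul]
    refine Finset.sum_congr rfl fun t3 _ => ?_
    rw [Finset.mul_sum]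
    refine Finset.sum_congr rfl fun t1 _ => ?_
    ring
  rw [Finset.sum_congr rfl step]
  exact Finset.sum_comm' (fun x y => by simp only [Finset.mem_Icc]; omega)
end
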